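/- arXiv:1303.2611 — 2 statements merged into one kernel-verified Lean document; each statement's English description precedes it below -/
import Mathlib

section
/- For ε > 0 and x ∈ ℝ, the function f(x) = |x| log(1 + x²/ε²) satisfies |f'(x)| ≤ 4 log(1 + x²/ε²) and |f''(x)| ≤ C/(ε + |x|) for x ≠ 0, with C a universal constant independent of ε. -/
private lemma hasDerivAt_g (s ε x : ℝ) (hε : 0 < ε) :
    HasDerivAt (fun y : ℝ => s * y * Real.log (1 + y ^ 2 / ε ^ 2))
      (s * (Real.log (1 + x ^ 2 / ε ^ 2) + 2 * x ^ 2 / (ε ^ 2 + x ^ 2))) x := by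
  have hεne : (ε : ℝ) ^ 2 ≠ 0 := by positivity
  have hpos : 0 < 1 + x ^ 2 / ε ^ 2 := by positivity
  have hs : (0:ℝ) < ε ^ 2 + x ^ 2 := by positivity
  have h1 : HasDerivAt (fun y : ℝ => 1 + y ^ 2 / ε ^ 2) ((2 * x ^ 1) / ε ^ 2) x := by
    have := ((hasDerivAt_pow 2 x).div_const (ε ^ 2)).const_add 1
    simpa using this
  have hlog : HasDerivAt (fun y : ℝ => Real.log (1 + y ^ 2 / ε ^ 2))
      ((2 * x ^ 1 / ε ^ 2) / (1 + x ^ 2 / ε ^ 2)) x := h1.log hpos.ne'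
  have hmul := (((hasDerivAt_id x).const_mul s).mul hlog)
  refine HasDerivAt.congr_deriv hmul ?_
  simp only [id]
  field_simp

private lemma hasDerivAt_g' (s ε x : ℝ) (hε : 0 < ε) :
    HasDerivAt (fun y : ℝ => s * (Real.log (1 + y ^ 2 / ε ^ 2) + 2 * y ^ 2 / (ε ^ 2 + y ^ 2)))
      (s * (2 * x / (ε ^ 2 + x ^ 2) + 4 * x * ε ^ 2 / (ε ^ 2 + x ^ 2) ^ 2)) x := by
  have hεne : (ε : ℝ) ^ 2 ≠ 0 := by positivity
  have hpos : 0 < 1 + x ^ 2 / ε ^ 2 := by positivity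
  have hs : (0:ℝ) < ε ^ 2 + x ^ 2 := by positivity
  have h1 : HasDerivAt (fun y : ℝ => 1 + y ^ 2 / ε ^ 2) ((2 * x ^ 1) / ε ^ 2) x := by
    have := ((hasDerivAt_pow 2 x).div_const (ε ^ 2)).const_add 1
    simpa using this
  have hlog : HasDerivAt (fun y : ℝ => Real.log (1 + y ^ 2 / ε ^ 2))
      ((2 * x ^ 1 / ε ^ 2) / (1 + x ^ 2 / ε ^ 2)) x := h1.log hpos.ne'
  have hnum : HasDerivAt (fun y : ℝ => 2 * y ^ 2) (2 * (2 * x ^ 1)) x :=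
    (hasDerivAt_pow 2 x).const_mul 2
  have hden : HasDerivAt (fun y : ℝ => ε ^ 2 + y ^ 2) (2 * x ^ 1) x := by
    simpa using (hasDerivAt_pow 2 x).const_add (ε ^ 2)
  have hdiv := hnum.div hden hs.ne'
  have := ((hlog.add hdiv).const_mul s)
  refine HasDerivAt.congr_deriv this ?_
  field_simp
  ring_nf

/-- `f(x) = |x| log(1 + x²/ε²)` satisfies `|f'(x)| ≤ 4 log(1 + x²/ε²)` and
`|f''(x)| ≤ C/(ε + |x|)` for `x ≠ 0`, with `C` a universal constant independent of `ε`. -/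
theorem abs_log_functional_derivative_bounds :
    ∃ C : ℝ, 0 < C ∧
      ∀ ε : ℝ, 0 < ε →
        ∀ x : ℝ, x ≠ 0 →
          |deriv (fun y : ℝ => |y| * Real.log (1 + y ^ 2 / ε ^ 2)) x| ≤
            4 * Real.log (1 + x ^ 2 / ε ^ 2) ∧
          |deriv (deriv (fun y : ℝ => |y| * Real.log (1 + y ^ 2 / ε ^ 2))) x| ≤
            C / (ε + |x|) := by
  refine ⟨20, by norm_num, fun ε hε x hx => ?_⟩
  set s : ℝ := if 0 < x then 1 else -1 with hs_def
  have hsx : 0 < s * x := by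
    rcases lt_or_gt_of_ne hx with h | h
    · simp only [hs_def, if_neg (not_lt.2 h.le)]; nlinarith
    · simp only [hs_def, if_pos h]; nlinarith
  have hs1 : |s| = 1 := by
    rcases lt_or_gt_of_ne hx with h | h
    · simp [hs_def, not_lt.2 h.le]
    · simp [hs_def, h]
  -- eventual equality near x
  have hev : (fun y : ℝ => |y| * Real.log (1 + y ^ 2 / ε ^ 2)) =ᶠ[nhds x]
      (fun y : ℝ => s * y * Real.log (1 + y ^ 2 / ε ^ 2)) := by
    have hc : Continuous fun y : ℝ => s * y := continuous_const.mul continuous_id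
    have hopen : IsOpen {y : ℝ | 0 < s * y} := isOpen_lt continuous_const hc
    have hev0 : ∀ᶠ y in nhds x, 0 < s * y := hopen.eventually_mem hsx
    filter_upwards [hev0] with y hy
    have hya : |y| = s * y := by
      calc |y| = |s * y| := by rw [abs_mul, hs1, one_mul]
        _ = s * y := abs_of_pos hy
    rw [hya]
  have hg := hasDerivAt_g s ε x hε
  have hgd : deriv (fun y : ℝ => s * y * Real.log (1 + y ^ 2 / ε ^ 2)) =
      fun y : ℝ => s * (Real.log (1 + y ^ 2 / ε ^ 2) + 2 * y ^ 2 / (ε ^ 2 + y ^ 2)) := by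
    funext y
    exact (hasDerivAt_g s ε y hε).deriv
  have hd1 : deriv (fun y : ℝ => |y| * Real.log (1 + y ^ 2 / ε ^ 2)) x =
      s * (Real.log (1 + x ^ 2 / ε ^ 2) + 2 * x ^ 2 / (ε ^ 2 + x ^ 2)) := by
    rw [hev.deriv_eq, hg.deriv]
  have hd2 : deriv (deriv (fun y : ℝ => |y| * Real.log (1 + y ^ 2 / ε ^ 2))) x =
      s * (2 * x / (ε ^ 2 + x ^ 2) + 4 * x * ε ^ 2 / (ε ^ 2 + x ^ 2) ^ 2) := by
    have h1 : deriv (fun y : ℝ => |y| * Real.log (1 + y ^ 2 / ε ^ 2)) =ᶠ[nhds x]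
        deriv (fun y : ℝ => s * y * Real.log (1 + y ^ 2 / ε ^ 2)) := hev.deriv
    rw [h1.deriv_eq, hgd, (hasDerivAt_g' s ε x hε).deriv]
  have hL : 0 ≤ Real.log (1 + x ^ 2 / ε ^ 2) := by
    apply Real.log_nonneg; nlinarith [sq_nonneg x, sq_nonneg ε, sq_nonneg (x/ε), div_nonneg (sq_nonneg x) (sq_nonneg ε)]
  have hs2 : (0:ℝ) < ε ^ 2 + x ^ 2 := by positivity
  constructor
  · rw [hd1, abs_mul, hs1, one_mul]
    have hT : 2 * x ^ 2 / (ε ^ 2 + x ^ 2) ≤ 2 * Real.log (1 + x ^ 2 / ε ^ 2) := by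
      have hinv : (0:ℝ) < (1 + x ^ 2 / ε ^ 2)⁻¹ := by positivity
      have h := Real.log_le_sub_one_of_pos hinv
      rw [Real.log_inv] at h
      have heq : (1 + x ^ 2 / ε ^ 2)⁻¹ - 1 = -(x ^ 2 / (ε ^ 2 + x ^ 2)) := by
        field_simp
        ring
      rw [heq] at h
      rw [mul_div_assoc]
      linarith
    have hT0 : 0 ≤ 2 * x ^ 2 / (ε ^ 2 + x ^ 2) := by positivity
    rw [abs_of_nonneg (by linarith)]
    linarith
  · rw [hd2, abs_mul, hs1, one_mul]
    have hea : (0:ℝ) < ε + |x| := by positivity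
    have habs : |2 * x / (ε ^ 2 + x ^ 2) + 4 * x * ε ^ 2 / (ε ^ 2 + x ^ 2) ^ 2| ≤
        2 * |x| / (ε ^ 2 + x ^ 2) + 4 * |x| * ε ^ 2 / (ε ^ 2 + x ^ 2) ^ 2 := by
      refine (abs_add_le _ _).trans ?_
      rw [abs_div, abs_div, abs_of_pos hs2, abs_of_pos (by positivity : (0:ℝ) < (ε^2+x^2)^2)]
      gcongr
      · rw [abs_mul]; simp
      · rw [abs_mul, abs_mul]
        simp [abs_of_pos hε, sq_abs]
    have h1b : 2 * |x| / (ε ^ 2 + x ^ 2) ≤ 4 / (ε + |x|) := by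
      rw [div_le_div_iff₀ hs2 hea]
      nlinarith [sq_nonneg (|x| - ε), sq_abs x, abs_nonneg x]
    have h2b : 4 * |x| * ε ^ 2 / (ε ^ 2 + x ^ 2) ^ 2 ≤ 16 / (ε + |x|) := by
      rw [div_le_div_iff₀ (by positivity) hea]
      nlinarith [sq_nonneg (|x| * ε - ε ^ 2), sq_abs x, abs_nonneg x,
        sq_nonneg (|x| - ε), sq_nonneg (|x| + ε), mul_nonneg (abs_nonneg x) hε.le,
        sq_nonneg (|x| ^ 2 - ε ^ 2), sq_nonneg (|x| ^ 2 + ε ^ 2)]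
    calc |2 * x / (ε ^ 2 + x ^ 2) + 4 * x * ε ^ 2 / (ε ^ 2 + x ^ 2) ^ 2|
        ≤ 2 * |x| / (ε ^ 2 + x ^ 2) + 4 * |x| * ε ^ 2 / (ε ^ 2 + x ^ 2) ^ 2 := habs
      _ ≤ 4 / (ε + |x|) + 16 / (ε + |x|) := add_le_add h1b h2b
      _ = 20 / (ε + |x|) := by rw [← add_div]; norm_num
end

section
/- Let (Z_n)_{n,m} be a family of nonnegative random variables and suppose there exist constants C and functions η(n,m) → 0 (as n,m → ∞) and η̃(ε) → 0 (as ε → 0) such that for all 0 < ε ≤ 1, E[log(1 + Z_{nm}²/ε²)] ≤ C(1 + |log ε| η̃(ε)) + C η(n,m)/ε², and suppose sup_{n,m} E[Z_{nm}^{p+1}] < ∞ for some p > 1. Then E[Z_{nm}^p] → 0 as n, m → ∞. -/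
open MeasureTheory Filter

/-- abstract Cauchy estimate. If nonnegative random variables `Z_{nm}` satisfy
`E[log(1 + Z²/ε²)] ≤ C(1 + |log ε| η̃(ε)) + C η(n,m)/ε²` with `η(n,m) → 0`, `η̃(ε) → 0`, and a
uniform `(p+1)`-moment bound, then `E[Z_{nm}^p] → 0` as `n, m → ∞`. -/
theorem cauchy_from_log_functional
    {Ω : Type*} [MeasurableSpace Ω] (μ : Measure Ω) [IsProbabilityMeasure μ]
    (Z : ℕ → ℕ → Ω → ℝ) (hZmeas : ∀ n m, Measurable (Z n m))
    (hZpos : ∀ n m ω, 0 ≤ Z n m ω)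
    (p : ℝ) (hp : 1 < p) (C : ℝ)
    (η : ℕ → ℕ → ℝ) (ηt : ℝ → ℝ)
    (hη : Tendsto (fun nm : ℕ × ℕ => η nm.1 nm.2) atTop (nhds 0))
    (hηt : Tendsto ηt (nhdsWithin 0 (Set.Ioi 0)) (nhds 0))
    (hlog : ∀ ε ∈ Set.Ioc (0:ℝ) 1, ∀ n m : ℕ,
      ∫ ω, Real.log (1 + (Z n m ω) ^ 2 / ε ^ 2) ∂μ ≤
        C * (1 + |Real.log ε| * ηt ε) + C * η n m / ε ^ 2)
    (hint : ∀ n m, Integrable (fun ω => (Z n m ω) ^ (p + 1)) μ)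
    (hmom : ∃ B : ℝ, ∀ n m : ℕ, ∫ ω, (Z n m ω) ^ (p + 1) ∂μ ≤ B) :
    Tendsto (fun nm : ℕ × ℕ => ∫ ω, (Z nm.1 nm.2 ω) ^ p ∂μ) atTop (nhds 0) := by
  obtain ⟨B, hB⟩ := hmom
  have hp0 : (0:ℝ) < p := lt_trans one_pos hp
  -- integrability of Z^q for 0 ≤ q ≤ p+1
  have hZint : ∀ n m : ℕ, ∀ q : ℝ, 0 ≤ q → q ≤ p + 1 →
      Integrable (fun ω => Z n m ω ^ q) μ := by
    intro n m q hq hq'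
    have hqmeas : Measurable (fun ω => Z n m ω ^ q) :=
      (Real.continuous_rpow_const hq).measurable.comp (hZmeas n m)
    refine Integrable.mono' ((integrable_const (1:ℝ)).add (hint n m))
      hqmeas.aestronglyMeasurable (ae_of_all _ fun ω => ?_)
    have h0 : (0:ℝ) ≤ Z n m ω := hZpos n m ω
    simp only [Pi.add_apply]
    rw [Real.norm_eq_abs, abs_of_nonneg (Real.rpow_nonneg h0 q)]
    by_cases h1 : Z n m ω ≤ 1
    · have := Real.rpow_le_one h0 h1 hq
      have h2 : (0:ℝ) ≤ Z n m ω ^ (p+1) := Real.rpow_nonneg h0 _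
      linarith
    · push_neg at h1
      have := Real.rpow_le_rpow_of_exponent_le h1.le hq'
      linarith
  -- nonnegativity of the integrals
  have hInonneg : ∀ n m : ℕ, ∀ q : ℝ, (0:ℝ) ≤ ∫ ω, Z n m ω ^ q ∂μ := fun n m q =>
    integral_nonneg fun ω => Real.rpow_nonneg (hZpos n m ω) q
  have hB0 : (0:ℝ) ≤ B := le_trans (hInonneg 0 0 (p+1)) (hB 0 0)
  -- key quantitative bound
  have key : ∀ n m : ℕ, ∀ ε ∈ Set.Ioc (0:ℝ) 1, ∀ L : ℝ, 0 < L →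
      ∫ ω, Z n m ω ^ p ∂μ ≤ ε ^ (p/2) +
        (L ^ p * ((C * (1 + |Real.log ε| * ηt ε)) / Real.log (1+1/ε)) +
         L ^ p * ((C * η n m / ε^2) / Real.log (1+1/ε))) + B / L := by
    intro n m ε hε L hL
    obtain ⟨hε0, hε1⟩ := hε
    set f := Z n m with hf
    have hfpos : ∀ ω, 0 ≤ f ω := hZpos n m
    set A := {ω | Real.sqrt ε ≤ f ω} with hA
    have hAmeas : MeasurableSet A := measurableSet_le measurable_const (hZmeas n m)
    have hc : 0 < Real.log (1+1/ε) := Real.log_pos (by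
      have : 0 < 1/ε := by positivity
      linarith)
    -- G := log(1 + f²/ε²) is integrable
    set G := fun ω => Real.log (1 + f ω ^ 2 / ε ^ 2) with hG
    have hGnonneg : ∀ ω, 0 ≤ G ω := fun ω => Real.log_nonneg (by
      have : 0 ≤ f ω ^ 2 / ε ^ 2 := by positivity
      linarith)
    have hf2int : Integrable (fun ω => f ω ^ 2) μ := by
      have h2 := hZint n m 2 (by norm_num) (by linarith)
      have : (fun ω => f ω ^ (2:ℝ)) = fun ω => f ω ^ (2:ℕ) := by
        funext ω
        rw [← Real.rpow_natCast (f ω) 2]; norm_num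
      rwa [this] at h2
    have hGmeas : Measurable G := by
      have : Measurable fun ω => 1 + f ω ^ 2 / ε ^ 2 :=
        (((hZmeas n m).pow_const 2).div_const _).const_add 1
      exact this.log
    have hGint : Integrable G μ := by
      refine Integrable.mono' (hf2int.div_const (ε^2)) hGmeas.aestronglyMeasurable
        (ae_of_all _ fun ω => ?_)
      rw [Real.norm_eq_abs, abs_of_nonneg (hGnonneg ω)]
      have h1 : 0 < 1 + f ω ^ 2 / ε ^ 2 := by positivity
      have := Real.log_le_sub_one_of_pos h1
      linarith
    -- Markov / Chebyshev via the log functional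
    have hsub : A ⊆ {ω | Real.log (1+1/ε) ≤ G ω} := by
      intro ω hω
      have h1 : Real.sqrt ε ≤ f ω := hω
      have h2 : ε ≤ f ω ^ 2 := by
        have := Real.sq_sqrt hε0.le
        nlinarith [Real.sqrt_nonneg ε]
      have h3 : 1/ε ≤ f ω ^ 2 / ε ^ 2 := by
        rw [div_le_div_iff₀ hε0 (by positivity)]
        nlinarith
      exact Real.log_le_log (by positivity) (by linarith)
    have markov := mul_meas_ge_le_integral_of_nonneg (ae_of_all μ hGnonneg) hGint
      (Real.log (1+1/ε))
    have hmuA : (μ A).toReal ≤ (∫ ω, G ω ∂μ) / Real.log (1+1/ε) := by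
      rw [le_div_iff₀ hc]
      have hto : (μ A).toReal ≤ (μ {ω | Real.log (1+1/ε) ≤ G ω}).toReal :=
        ENNReal.toReal_mono (measure_ne_top μ _) (measure_mono hsub)
      calc (μ A).toReal * Real.log (1+1/ε)
          ≤ (μ {ω | Real.log (1+1/ε) ≤ G ω}).toReal * Real.log (1+1/ε) :=
            mul_le_mul_of_nonneg_right hto hc.le
        _ ≤ ∫ ω, G ω ∂μ := by rw [mul_comm]; exact markov
    have hGbound : (∫ ω, G ω ∂μ) ≤ C * (1 + |Real.log ε| * ηt ε) + C * η n m / ε ^ 2 :=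
      hlog ε ⟨hε0, hε1⟩ n m
    -- pointwise bound
    have hpt : ∀ ω, f ω ^ p ≤
        ε ^ (p/2) + A.indicator (fun _ => L ^ p) ω + f ω ^ (p+1) / L := by
      intro ω
      have h0 := hfpos ω
      have hind : 0 ≤ A.indicator (fun _ => L ^ p) ω :=
        Set.indicator_nonneg (fun _ _ => Real.rpow_nonneg hL.le p) ω
      have hlast : 0 ≤ f ω ^ (p+1) / L := by positivity
      by_cases h1 : f ω < Real.sqrt ε
      · have : f ω ^ p ≤ Real.sqrt ε ^ p := Real.rpow_le_rpow h0 h1.le hp0.le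
        have heq : Real.sqrt ε ^ p = ε ^ (p/2) := by
          rw [Real.sqrt_eq_rpow, ← Real.rpow_mul hε0.le]
          congr 1; ring
        rw [heq] at this
        linarith
      · push_neg at h1
        have hωA : ω ∈ A := h1
        by_cases h2 : f ω < L
        · have : f ω ^ p ≤ L ^ p := Real.rpow_le_rpow h0 h2.le hp0.le
          rw [Set.indicator_of_mem hωA]
          have hε2 : 0 ≤ ε ^ (p/2) := Real.rpow_nonneg hε0.le _
          linarith
        · push_neg at h2
          have hfω : 0 < f ω := lt_of_lt_of_le hL h2
          have : f ω ^ p ≤ f ω ^ (p+1) / L := by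
            rw [le_div_iff₀ hL, Real.rpow_add hfω, Real.rpow_one]
            exact mul_le_mul_of_nonneg_left h2 (Real.rpow_nonneg h0 p)
          have hε2 : 0 ≤ ε ^ (p/2) := Real.rpow_nonneg hε0.le _
          linarith
    -- integrate the pointwise bound
    have hRHSint : Integrable (fun ω =>
        ε ^ (p/2) + A.indicator (fun _ => L ^ p) ω + f ω ^ (p+1) / L) μ := by
      refine (((integrable_const _).add ?_).add ((hint n m).div_const L))
      exact (integrable_const (L ^ p)).indicator hAmeas
    have hInt := integral_mono (hZint n m p hp0.le (by linarith)) hRHSint hpt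
    have i2 : Integrable (fun ω => A.indicator (fun _ => L ^ p) ω) μ :=
      (integrable_const (L ^ p)).indicator hAmeas
    have i1 : Integrable (fun ω => ε ^ (p/2) + A.indicator (fun _ => L ^ p) ω) μ :=
      (integrable_const _).add i2
    have hcalc : ∫ ω, (ε ^ (p/2) + A.indicator (fun _ => L ^ p) ω + f ω ^ (p+1) / L) ∂μ
        = ε ^ (p/2) + L ^ p * (μ A).toReal + (∫ ω, f ω ^ (p+1) ∂μ) / L := by
      rw [integral_add i1 ((hint n m).div_const L),
        integral_add (integrable_const _) i2,
        integral_const, integral_indicator_const _ hAmeas, integral_div]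
      simp [mul_comm]
      rfl
    rw [hcalc] at hInt
    -- assemble
    have hLp : 0 ≤ L ^ p := Real.rpow_nonneg hL.le p
    have h4 : L ^ p * (μ A).toReal ≤
        L ^ p * ((C * (1 + |Real.log ε| * ηt ε)) / Real.log (1+1/ε)) +
        L ^ p * ((C * η n m / ε^2) / Real.log (1+1/ε)) := by
      have : (μ A).toReal ≤
          (C * (1 + |Real.log ε| * ηt ε) + C * η n m / ε ^ 2) / Real.log (1+1/ε) :=
        le_trans hmuA (div_le_div_of_nonneg_right hGbound hc.le |>.trans_eq rfl)
      calc L ^ p * (μ A).toReal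
          ≤ L ^ p * ((C * (1 + |Real.log ε| * ηt ε) + C * η n m / ε ^ 2) /
            Real.log (1+1/ε)) := mul_le_mul_of_nonneg_left this hLp
        _ = _ := by ring
    have h5 : (∫ ω, f ω ^ (p+1) ∂μ) / L ≤ B / L :=
      div_le_div_of_nonneg_right (hB n m) hL.le |>.trans_eq rfl
    linarith
  -- now the limit argument
  rw [Metric.tendsto_nhds]
  intro δ hδ
  set L : ℝ := 3 * B / δ + 1 with hLdef
  have hL : 0 < L := by positivity
  have hBL : B / L < δ / 3 := by
    rw [div_lt_iff₀ hL, hLdef]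
    have : δ / 3 * (3 * B / δ) = B := by field_simp
    nlinarith
  have hLp : 0 ≤ L ^ p := Real.rpow_nonneg hL.le p
  -- choose ε
  have hlim1 : Tendsto (fun ε : ℝ => ε ^ (p/2)) (nhdsWithin 0 (Set.Ioi 0)) (nhds 0) := by
    have hcont : ContinuousAt (fun ε : ℝ => ε ^ (p/2)) 0 :=
      Real.continuousAt_rpow_const 0 (p/2) (Or.inr (by positivity))
    have h0 : (0:ℝ) ^ (p/2) = 0 := Real.zero_rpow (by positivity)
    have := hcont.tendsto
    rw [h0] at this
    exact this.mono_left nhdsWithin_le_nhds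
  have hloglim : Tendsto (fun ε : ℝ => Real.log (1+1/ε)) (nhdsWithin 0 (Set.Ioi 0)) atTop := by
    refine Real.tendsto_log_atTop.comp ?_
    have h1e : Tendsto (fun ε : ℝ => 1/ε) (nhdsWithin 0 (Set.Ioi 0)) atTop :=
      tendsto_inv_nhdsGT_zero.congr fun x => (one_div x).symm
    exact tendsto_atTop_add_const_left _ 1 h1e
  have hlim2 : Tendsto (fun ε : ℝ => L ^ p * ((C * (1 + |Real.log ε| * ηt ε)) /
      Real.log (1+1/ε))) (nhdsWithin 0 (Set.Ioi 0)) (nhds 0) := by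
    have heq : (fun ε : ℝ => C * (1 + |Real.log ε| * ηt ε) / Real.log (1+1/ε))
        = fun ε => C * (Real.log (1+1/ε))⁻¹ +
          (C * ηt ε) * (|Real.log ε| / Real.log (1+1/ε)) := by
      funext ε; ring
    have h1 : Tendsto (fun ε : ℝ => C * (Real.log (1+1/ε))⁻¹)
        (nhdsWithin 0 (Set.Ioi 0)) (nhds 0) := by
      have := (tendsto_inv_atTop_zero.comp hloglim).const_mul C
      simpa using this
    have h2 : Tendsto (fun ε : ℝ => (C * ηt ε) * (|Real.log ε| / Real.log (1+1/ε)))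
        (nhdsWithin 0 (Set.Ioi 0)) (nhds 0) := by
      have hbd : ∀ᶠ ε in nhdsWithin (0:ℝ) (Set.Ioi 0),
          ‖(C * ηt ε) * (|Real.log ε| / Real.log (1+1/ε))‖ ≤ |C| * |ηt ε| := by
        filter_upwards [Ioo_mem_nhdsGT_of_mem (Set.left_mem_Ico.2 one_pos)] with ε hε
        obtain ⟨hε0, hε1⟩ := hε
        have hc : 0 < Real.log (1+1/ε) := Real.log_pos (by
          have : 0 < 1/ε := by positivity
          linarith)
        have hle : |Real.log ε| ≤ Real.log (1+1/ε) := by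
          rw [abs_of_nonpos (Real.log_nonpos hε0.le hε1.le)]
          rw [← Real.log_inv]
          refine Real.log_le_log (by positivity) ?_
          rw [one_div]
          linarith
        have hq0 : 0 ≤ |Real.log ε| / Real.log (1+1/ε) := by positivity
        have hq1 : |Real.log ε| / Real.log (1+1/ε) ≤ 1 := by
          rw [div_le_one hc]; exact hle
        rw [norm_mul, Real.norm_eq_abs, Real.norm_eq_abs, abs_mul,
          abs_of_nonneg hq0]
        calc |C| * |ηt ε| * (|Real.log ε| / Real.log (1+1/ε))
            ≤ |C| * |ηt ε| * 1 := by
              exact mul_le_mul_of_nonneg_left hq1 (by positivity)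
          _ = |C| * |ηt ε| := by ring
      have hgl : Tendsto (fun ε => |C| * |ηt ε|) (nhdsWithin 0 (Set.Ioi 0)) (nhds 0) := by
        have := (hηt.abs).const_mul |C|
        simpa using this
      exact squeeze_zero_norm' hbd hgl
    have hsum := h1.add h2
    rw [← heq] at hsum
    have := hsum.const_mul (L ^ p)
    simpa using this
  have hev : ∀ᶠ ε in nhdsWithin (0:ℝ) (Set.Ioi 0),
      ε ∈ Set.Ioc (0:ℝ) 1 ∧ ε ^ (p/2) < δ/3 ∧
      L ^ p * ((C * (1 + |Real.log ε| * ηt ε)) / Real.log (1+1/ε)) < δ/6 := by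
    have e1 : ∀ᶠ ε in nhdsWithin (0:ℝ) (Set.Ioi 0), ε ∈ Set.Ioc (0:ℝ) 1 := by
      filter_upwards [Ioo_mem_nhdsGT_of_mem (Set.left_mem_Ico.2 one_pos)] with ε hε
      exact ⟨hε.1, hε.2.le⟩
    have e2 := (hlim1.eventually (eventually_lt_nhds (by positivity : (0:ℝ) < δ/3))).mono
      (fun ε h => h)
    have e3 := hlim2.eventually (eventually_lt_nhds (by positivity : (0:ℝ) < δ/6))
    filter_upwards [e1, e2, e3] with ε h1 h2 h3
    exact ⟨h1, h2, h3⟩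
  obtain ⟨ε, hε_mem, hε1, hε2⟩ := hev.exists
  obtain ⟨hε0, hεle1⟩ := hε_mem
  have hc : 0 < Real.log (1+1/ε) := Real.log_pos (by
    have : 0 < 1/ε := by positivity
    linarith)
  -- eventually in (n,m)
  have hevnm : ∀ᶠ nm : ℕ × ℕ in atTop,
      L ^ p * ((C * η nm.1 nm.2 / ε^2) / Real.log (1+1/ε)) < δ/6 := by
    have hK : Tendsto (fun nm : ℕ × ℕ =>
        L ^ p * ((C * η nm.1 nm.2 / ε^2) / Real.log (1+1/ε))) atTop (nhds 0) := by
      have heq : (fun nm : ℕ × ℕ => L ^ p * ((C * η nm.1 nm.2 / ε^2) / Real.log (1+1/ε)))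
          = fun nm => (L ^ p * C / (ε^2 * Real.log (1+1/ε))) * η nm.1 nm.2 := by
        funext nm; ring
      rw [heq]
      simpa using hη.const_mul (L ^ p * C / (ε^2 * Real.log (1+1/ε)))
    have := hK.eventually (eventually_lt_nhds (by positivity : (0:ℝ) < δ/6))
    exact this
  filter_upwards [hevnm] with nm hnm
  have hkey := key nm.1 nm.2 ε ⟨hε0, hεle1⟩ L hL
  have hnn : 0 ≤ ∫ ω, Z nm.1 nm.2 ω ^ p ∂μ := hInonneg nm.1 nm.2 p
  rw [Real.dist_eq, sub_zero, abs_of_nonneg hnn]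
  linarith
end
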